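/- arXiv:2305.09634 — 2 statements merged into one kernel-verified Lean document; each statement's English description precedes it below -/
import Mathlib

section
/- For every state s ∈ S and every action a legal at s, Val(s) ≥ ∑_{s'} (P s a)(s')·Val(s'). -/
open scoped ENNReal NNReal Classical
open Filter

universe u v

variable {S : Type u} {A : Type v}

/-- A finite MDP: `P s a = some d` means action `a` is legal at `s` and `d` is a
probability distribution on `S`; every state has at least one legal action. -/
structure MDP (S : Type u) (A : Type v) [Fintype S] [Fintype A] where
  P : S → A → Option (S → NNReal)
  sum_one : ∀ s a d, P s a = some d → (∑ s', d s') = 1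
  exists_legal : ∀ s, ∃ a, (P s a).isSome

/-- Last state of an alternating path starting at `s` with steps `steps`. -/
def lastState : S → List (A × S) → S
  | s, [] => s
  | _, (_, s') :: rest => lastState s' rest

/-- A finite path: a start state together with a list of (action, next-state) steps. -/
structure FPath (S : Type u) (A : Type v) where
  start : S
  steps : List (A × S)

namespace FPath

def last (ρ : FPath S A) : S := lastState ρ.start ρ.steps

def states (ρ : FPath S A) : List S := ρ.start :: ρ.steps.map Prod.snd

def length (ρ : FPath S A) : ℕ := ρ.steps.length

end FPath

/-- A (raw) strategy: maps each finite path (start state + steps) to a distribution on actions. -/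
def Strat (S : Type u) (A : Type v) := S → List (A × S) → A → ℝ≥0∞

/-- Shifted strategy `σ_ρ` for `ρ = (s₀, pre)`: `σ_ρ(ρ') = σ(ρ·ρ')`. -/
def shiftStrat (σ : Strat S A) (s₀ : S) (pre : List (A × S)) : Strat S A :=
  fun _ steps a => σ s₀ (pre ++ steps) a

/-- Generic cylinder weight (product of strategy- and transition-probabilities along the
steps), relative to a transition kernel `p`. The accumulator `pre` is the path-prefix so far. -/
noncomputable def wtP (p : S → A → S → ℝ≥0∞) (σ : Strat S A) (s₀ : S) :
    List (A × S) → List (A × S) → ℝ≥0∞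
  | _, [] => 1
  | pre, (a, s') :: rest =>
      σ s₀ pre a * p (lastState s₀ pre) a s' * wtP p σ s₀ (pre ++ [(a, s')]) rest
  termination_by pre l => l.length

/-- Generic cylinder probability of path `ρ` from start state `s`, kernel `p`. -/
noncomputable def cylProbP (p : S → A → S → ℝ≥0∞) (σ : Strat S A) (s : S) (ρ : FPath S A) :
    ℝ≥0∞ :=
  if ρ.start = s then wtP p σ ρ.start [] ρ.steps else 0

namespace MDP

variable [Fintype S] [Fintype A]

def legal (M : MDP S A) (s : S) (a : A) : Prop := (M.P s a).isSome

noncomputable def prob (M : MDP S A) (s : S) (a : A) (s' : S) : ℝ≥0∞ :=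
  (M.P s a).elim 0 fun d => (d s' : ℝ≥0∞)

/-- `ρ` is a finite path of `M` from `s`: every action legal, every transition of
positive probability. -/
def IsPathFrom (M : MDP S A) : S → List (A × S) → Prop
  | _, [] => True
  | s, (a, s') :: rest => M.legal s a ∧ 0 < M.prob s a s' ∧ M.IsPathFrom s' rest

def IsPath (M : MDP S A) (ρ : FPath S A) : Prop := M.IsPathFrom ρ.start ρ.steps

/-- `σ` is a strategy: at every finite path it gives a probability distribution on actions
supported on actions legal at the last state. -/
def IsStrategy (M : MDP S A) (σ : Strat S A) : Prop :=
  ∀ s steps, M.IsPathFrom s steps →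
    (∑ a, σ s steps a) = 1 ∧ ∀ a, 0 < σ s steps a → M.legal (lastState s steps) a

/-- Cylinder probability `P_{σ,s}(ρ)` in `M`. -/
noncomputable def cylProb (M : MDP S A) (σ : Strat S A) (s : S) (ρ : FPath S A) : ℝ≥0∞ :=
  cylProbP M.prob σ s ρ

/-- `T` is a set of sink states: each `t ∈ T` has exactly one legal action, leading back
to `t` with probability `1`. -/
def SinkSet (M : MDP S A) (T : Set S) : Prop :=
  ∀ t ∈ T, (∃! a, M.legal t a) ∧ ∀ a, M.legal t a → M.prob t a t = 1

/-- Generic pruned finite-path predicate: all states have positive value `v` and every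
step uses an `opt` state-action pair with positive transition probability in `M`. -/
def IsPathFromPruned (M : MDP S A) (v : S → ℝ≥0∞) (opt : S → A → Prop) :
    S → List (A × S) → Prop
  | s, [] => 0 < v s
  | s, (a, s') :: rest =>
      0 < v s ∧ opt s a ∧ 0 < M.prob s a s' ∧ M.IsPathFromPruned v opt s' rest

/-! ### Reachability -/

/-- `ρ` is a `T`-hitting path: its last state lies in `T` and no other state does. -/
def HitsFirst (T : Set S) (ρ : FPath S A) : Prop :=
  ρ.last ∈ T ∧ ∀ x ∈ ρ.states.dropLast, x ∉ T

/-- `Pr_{σ,s}(◊T)`: sum over `T`-hitting paths starting at `s` of their cylinder probabilities. -/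
noncomputable def prReach (M : MDP S A) (σ : Strat S A) (s : S) (T : Set S) : ℝ≥0∞ :=
  ∑' ρ : {ρ : FPath S A // M.IsPath ρ ∧ HitsFirst T ρ ∧ ρ.start = s}, M.cylProb σ s ρ.1

/-- `Val(s)` for reachability: supremum over strategies of `Pr_{σ,s}(◊T)`. -/
noncomputable def reachVal (M : MDP S A) (T : Set S) (s : S) : ℝ≥0∞ :=
  ⨆ (σ : Strat S A) (_ : M.IsStrategy σ), M.prReach σ s T

/-- `(s,a) ∈ Opt` for reachability. -/
def OptR (M : MDP S A) (T : Set S) (s : S) (a : A) : Prop :=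
  M.legal s a ∧ M.reachVal T s = ∑ s', M.prob s a s' * M.reachVal T s'

/-- `σ ∈ Σ^Opt` for reachability. -/
def SigmaOptR (M : MDP S A) (T : Set S) (σ : Strat S A) : Prop :=
  ∀ s steps, M.IsPathFrom s steps → ∀ a, 0 < σ s steps a → M.OptR T (lastState s steps) a

/-- Transition probabilities of the pruned MDP `M'` for reachability. -/
noncomputable def probR' (M : MDP S A) (T : Set S) (s : S) (a : A) (s' : S) : ℝ≥0∞ :=
  if M.OptR T s a ∧ 0 < M.reachVal T s then
    M.prob s a s' * M.reachVal T s' / M.reachVal T s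
  else 0

/-- `ρ` is a finite path of the pruned MDP `M'` (reachability version). -/
def IsPathR' (M : MDP S A) (T : Set S) (ρ : FPath S A) : Prop :=
  M.IsPathFromPruned (M.reachVal T) (M.OptR T) ρ.start ρ.steps

/-- Cylinder probability `P'_{σ,s}(ρ)` in the pruned MDP `M'` (reachability version). -/
noncomputable def cylProbR' (M : MDP S A) (T : Set S) (σ : Strat S A) (s : S) (ρ : FPath S A) :
    ℝ≥0∞ :=
  cylProbP (M.probR' T) σ s ρ

/-- `Pr'_{σ,s}(◊T)` in the pruned MDP `M'`. -/
noncomputable def prReach' (M : MDP S A) (σ : Strat S A) (s : S) (T : Set S) : ℝ≥0∞ :=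
  ∑' ρ : {ρ : FPath S A // M.IsPathR' T ρ ∧ HitsFirst T ρ ∧ ρ.start = s},
    M.cylProbR' T σ s ρ.1

/-- Probability of hitting `T` for the first time in exactly `r` steps, in `M`. -/
noncomputable def hitLenProb (M : MDP S A) (σ : Strat S A) (s : S) (T : Set S) (r : ℕ) :
    ℝ≥0∞ :=
  ∑' ρ : {ρ : FPath S A // M.IsPath ρ ∧ HitsFirst T ρ ∧ ρ.start = s ∧ ρ.length = r},
    M.cylProb σ s ρ.1

/-- Probability of hitting `T` for the first time in exactly `r` steps, in `M'`. -/
noncomputable def hitLenProb' (M : MDP S A) (σ : Strat S A) (s : S) (T : Set S) (r : ℕ) :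
    ℝ≥0∞ :=
  ∑' ρ : {ρ : FPath S A // M.IsPathR' T ρ ∧ HitsFirst T ρ ∧ ρ.start = s ∧ ρ.length = r},
    M.cylProbR' T σ s ρ.1

/-- Conditional expected length to target `E_{σ,s}(len_T | ◊T)`. -/
noncomputable def condExpLen (M : MDP S A) (σ : Strat S A) (s : S) (T : Set S) : ℝ≥0∞ :=
  ∑' r : ℕ, (r : ℝ≥0∞) * M.hitLenProb σ s T r / M.prReach σ s T

/-- Expected length to target in `M'`, `E'_{σ,s}(len_T)`; `∞` unless `Pr'_{σ,s}(◊T) = 1`. -/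
noncomputable def expLen' (M : MDP S A) (σ : Strat S A) (s : S) (T : Set S) : ℝ≥0∞ :=
  if M.prReach' σ s T = 1 then ∑' r : ℕ, (r : ℝ≥0∞) * M.hitLenProb' σ s T r else ⊤

/-! ### Safety -/

/-- `Safe_n(σ,s)`: probability of the paths of length `n` from `s` avoiding `Bad`. -/
noncomputable def safeN (M : MDP S A) (σ : Strat S A) (s : S) (Bad : Set S) (n : ℕ) : ℝ≥0∞ :=
  ∑' ρ : {ρ : FPath S A //
      M.IsPath ρ ∧ ρ.start = s ∧ ρ.length = n ∧ ∀ x ∈ ρ.states, x ∉ Bad},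
    M.cylProb σ s ρ.1

/-- `Pr_{σ,s}(□¬Bad) := ⨅ n, Safe_n(σ,s)`. -/
noncomputable def prSafe (M : MDP S A) (σ : Strat S A) (s : S) (Bad : Set S) : ℝ≥0∞ :=
  ⨅ n : ℕ, M.safeN σ s Bad n

/-- `Val(s)` for safety: supremum over strategies of `Pr_{σ,s}(□¬Bad)`. -/
noncomputable def safeVal (M : MDP S A) (Bad : Set S) (s : S) : ℝ≥0∞ :=
  ⨆ (σ : Strat S A) (_ : M.IsStrategy σ), M.prSafe σ s Bad

/-- `(s,a) ∈ Opt` for safety. -/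
def OptS (M : MDP S A) (Bad : Set S) (s : S) (a : A) : Prop :=
  M.legal s a ∧ M.safeVal Bad s = ∑ s', M.prob s a s' * M.safeVal Bad s'

/-- `σ ∈ Σ^Opt` for safety. -/
def SigmaOptS (M : MDP S A) (Bad : Set S) (σ : Strat S A) : Prop :=
  ∀ s steps, M.IsPathFrom s steps → ∀ a, 0 < σ s steps a → M.OptS Bad (lastState s steps) a

/-- `UPreⁱ(Bad)`. -/
def UPre (M : MDP S A) (Bad : Set S) : ℕ → Set S
  | 0 => Bad
  | i + 1 => {s | ∀ a, M.legal s a → ∃ s' ∈ M.UPre Bad i, 0 < M.prob s a s'}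

/-- `Good := S \ UPre*(Bad)`. -/
def GoodSet (M : MDP S A) (Bad : Set S) : Set S := (⋃ i, M.UPre Bad i)ᶜ

/-- `V := S \ (Good ∪ Bad)`. -/
def VSet (M : MDP S A) (Bad : Set S) : Set S := (M.GoodSet Bad ∪ Bad)ᶜ

/-- `Pr_{σ,s}(GoodCyl(ρ)) := P_{σ,s}(ρ) · Pr_{σ_ρ, last(ρ)}(□¬Bad)`. -/
noncomputable def goodCyl (M : MDP S A) (σ : Strat S A) (s : S) (Bad : Set S) (ρ : FPath S A) :
    ℝ≥0∞ :=
  M.cylProb σ s ρ * M.prSafe (shiftStrat σ ρ.start ρ.steps) ρ.last Bad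

/-- Transition probabilities of the pruned MDP `M'` for safety. -/
noncomputable def probS' (M : MDP S A) (Bad : Set S) (s : S) (a : A) (s' : S) : ℝ≥0∞ :=
  if M.OptS Bad s a ∧ 0 < M.safeVal Bad s then
    M.prob s a s' * M.safeVal Bad s' / M.safeVal Bad s
  else 0

/-- `ρ` is a finite path of the pruned MDP `M'` (safety version). -/
def IsPathS' (M : MDP S A) (Bad : Set S) (ρ : FPath S A) : Prop :=
  M.IsPathFromPruned (M.safeVal Bad) (M.OptS Bad) ρ.start ρ.steps

/-- Cylinder probability `P'_{σ,s}(ρ)` in the pruned MDP `M'` (safety version). -/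
noncomputable def cylProbS' (M : MDP S A) (Bad : Set S) (σ : Strat S A) (s : S)
    (ρ : FPath S A) : ℝ≥0∞ :=
  cylProbP (M.probS' Bad) σ s ρ

end MDP

/-- `Reward_n(ρ) = ∑_{i<n} R(sᵢ, aᵢ)` for `ρ` starting at `s` with steps `steps`. -/
def rewardOf (R : S → A → ℝ) : S → List (A × S) → ℝ
  | _, [] => 0
  | s, (a, s') :: rest => R s a + rewardOf R s' rest

namespace MDP

variable [Fintype S] [Fintype A]

/-- `E'_{σ,s}(Reward_n)` in the pruned MDP `M'` (safety version). -/
noncomputable def expRewN' (M : MDP S A) (Bad : Set S) (R : S → A → ℝ) (σ : Strat S A)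
    (s : S) (n : ℕ) : ℝ :=
  ∑' ρ : {ρ : FPath S A // M.IsPathS' Bad ρ ∧ ρ.start = s ∧ ρ.length = n},
    (M.cylProbS' Bad σ s ρ.1).toReal * rewardOf R ρ.1.start ρ.1.steps

/-- `E'_{σ,s}(MP) := liminf_n (1/n)·E'_{σ,s}(Reward_n)`. -/
noncomputable def mp' (M : MDP S A) (Bad : Set S) (R : S → A → ℝ) (σ : Strat S A) (s : S) :
    ℝ :=
  Filter.atTop.liminf fun n : ℕ => M.expRewN' Bad R σ s n / n

/-- `E_{σ,s}(Reward_n | □¬Bad)`. -/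
noncomputable def condExpRewN (M : MDP S A) (Bad : Set S) (R : S → A → ℝ) (σ : Strat S A)
    (s : S) (n : ℕ) : ℝ :=
  (∑' ρ : {ρ : FPath S A // M.IsPath ρ ∧ ρ.start = s ∧ ρ.length = n},
    (M.goodCyl σ s Bad ρ.1).toReal * rewardOf R ρ.1.start ρ.1.steps) /
  (M.prSafe σ s Bad).toReal

/-- `E_{σ,s}(MP | □¬Bad) := liminf_n (1/n)·E_{σ,s}(Reward_n | □¬Bad)`. -/
noncomputable def condMP (M : MDP S A) (Bad : Set S) (R : S → A → ℝ) (σ : Strat S A)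
    (s : S) : ℝ :=
  Filter.atTop.liminf fun n : ℕ => M.condExpRewN Bad R σ s n / n

end MDP


section AuxStmt0

variable [Fintype S] [Fintype A]

/-- Baseline strategy: always play some legal action with probability 1. -/
noncomputable def baseStrat (M : MDP S A) : Strat S A :=
  fun s₀ steps a' => if a' = (M.exists_legal (lastState s₀ steps)).choose then 1 else 0

lemma baseStrat_isStrategy (M : MDP S A) : M.IsStrategy (baseStrat M) := by
  intro s steps _
  constructor
  · simp [baseStrat]
  · intro a hpos
    by_cases h : a = (M.exists_legal (lastState s steps)).choose
    · subst h; exact (M.exists_legal (lastState s steps)).choose_spec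
    · simp [baseStrat, h] at hpos

/-- Combined strategy: at the empty path from `s`, play `a`; after a first step to `t`,
follow `τ t`; elsewhere follow the baseline strategy. -/
noncomputable def combStrat (M : MDP S A) (s : S) (a : A) (τ : S → Strat S A) : Strat S A :=
  fun s₀ steps a' =>
    if s₀ = s then
      match steps with
      | [] => if a' = a then 1 else 0
      | (_, t) :: rest => τ t t rest a'
    else baseStrat M s₀ steps a'

lemma combStrat_isStrategy (M : MDP S A) (s : S) (a : A) (ha : M.legal s a)
    (τ : S → Strat S A) (hτ : ∀ x, M.IsStrategy (τ x)) :
    M.IsStrategy (combStrat M s a τ) := by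
  intro s₀ steps hpath
  by_cases hs : s₀ = s
  · subst hs
    cases steps with
    | nil =>
        constructor
        · simp [combStrat]
        · intro a' hpos
          by_cases h : a' = a
          · subst h; exact ha
          · simp [combStrat, h] at hpos
    | cons step rest =>
        obtain ⟨b, t⟩ := step
        have h2 := (hτ t) t rest hpath.2.2
        constructor
        · simpa [combStrat] using h2.1
        · intro a' hpos
          have : 0 < τ t t rest a' := by simpa [combStrat] using hpos
          exact h2.2 a' this
  · have h2 := baseStrat_isStrategy M s₀ steps hpath
    constructor
    · simpa [combStrat, hs] using h2.1
    · intro a' hpos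
      have : 0 < baseStrat M s₀ steps a' := by simpa [combStrat, hs] using hpos
      exact h2.2 a' this

lemma wtP_shift (p : S → A → S → ℝ≥0∞) (σ σ' : Strat S A) (s₀ s₁ : S) (a : A)
    (h : ∀ pre a', σ s₀ ((a, s₁) :: pre) a' = σ' s₁ pre a') :
    ∀ (rest pre : List (A × S)),
      wtP p σ s₀ ((a, s₁) :: pre) rest = wtP p σ' s₁ pre rest := by
  intro rest
  induction rest with
  | nil => intro pre; simp [wtP]
  | cons step r ih =>
      intro pre
      obtain ⟨b, t⟩ := step
      rw [wtP, wtP, h]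
      have hlast : lastState s₀ ((a, s₁) :: pre) = lastState s₁ pre := rfl
      rw [hlast]
      have : (a, s₁) :: pre ++ [(b, t)] = (a, s₁) :: (pre ++ [(b, t)]) := rfl
      rw [this, ih (pre ++ [(b, t)])]

lemma finset_sum_iSup_le {ι : Type*} {J : Type*} [Nonempty J] (f : ι → J → ℝ≥0∞)
    (t : Finset ι) : ∑ i ∈ t, ⨆ j, f i j ≤ ⨆ g : ι → J, ∑ i ∈ t, f i (g i) := by
  classical
  induction t using Finset.induction_on with
  | empty => simp
  | @insert a t hnot ih =>
      rw [Finset.sum_insert hnot]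
      calc (⨆ j, f a j) + ∑ i ∈ t, ⨆ j, f i j
          ≤ (⨆ j, f a j) + ⨆ g : ι → J, ∑ i ∈ t, f i (g i) := add_le_add (le_refl _) ih
        _ = ⨆ j, ⨆ g : ι → J, (f a j + ∑ i ∈ t, f i (g i)) := by
            rw [ENNReal.iSup_add]
            exact iSup_congr fun j => ENNReal.add_iSup _
        _ ≤ ⨆ g : ι → J, ∑ i ∈ insert a t, f i (g i) := by
            refine iSup_le fun j => iSup_le fun g => ?_
            refine le_iSup_of_le (Function.update g a j) ?_
            rw [Finset.sum_insert hnot, Function.update_self]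
            refine le_of_eq ?_
            refine congrArg (f a j + ·) (Finset.sum_congr rfl fun i hi => ?_)
            rw [Function.update_of_ne (ne_of_mem_of_not_mem hi hnot)]

/-- Equivalence between hitting paths from `x` and their step lists. -/
def pathEquiv (M : MDP S A) (T : Set S) (x : S) :
    {l : List (A × S) // M.IsPath ⟨x, l⟩ ∧ MDP.HitsFirst T ⟨x, l⟩} ≃
    {ρ : FPath S A // M.IsPath ρ ∧ MDP.HitsFirst T ρ ∧ ρ.start = x} where
  toFun l := ⟨⟨x, l.1⟩, l.2.1, l.2.2, rfl⟩
  invFun ρ := ⟨ρ.1.steps, by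
    obtain ⟨⟨st, steps⟩, h1, h2, h3⟩ := ρ
    cases h3
    exact ⟨h1, h2⟩⟩
  left_inv l := rfl
  right_inv ρ := by
    obtain ⟨⟨st, steps⟩, h1, h2, h3⟩ := ρ
    cases h3
    rfl

lemma prReach_eq_list (M : MDP S A) (σ : Strat S A) (x : S) (T : Set S) :
    M.prReach σ x T = ∑' l : List (A × S),
      if M.IsPath ⟨x, l⟩ ∧ MDP.HitsFirst T ⟨x, l⟩ then M.cylProb σ x ⟨x, l⟩ else 0 := by
  classical
  calc M.prReach σ x T
      = ∑' l : ({l : List (A × S) | M.IsPath ⟨x, l⟩ ∧ MDP.HitsFirst T ⟨x, l⟩} :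
            Set (List (A × S))), M.cylProb σ x ⟨x, l.1⟩ :=
        (Equiv.tsum_eq (pathEquiv M T x) fun ρ => M.cylProb σ x ρ.1).symm
    _ = ∑' l : List (A × S),
          Set.indicator {l : List (A × S) | M.IsPath ⟨x, l⟩ ∧ MDP.HitsFirst T ⟨x, l⟩}
            (fun l => M.cylProb σ x ⟨x, l⟩) l :=
        tsum_subtype {l : List (A × S) | M.IsPath ⟨x, l⟩ ∧ MDP.HitsFirst T ⟨x, l⟩}
          (fun l => M.cylProb σ x ⟨x, l⟩)
    _ = _ := tsum_congr fun l => by simp [Set.indicator_apply]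

end AuxStmt0
/-- For every state `s ∈ S` and every action `a` legal at `s`,
`Val(s) ≥ ∑_{s'} (P s a)(s')·Val(s')`. -/
theorem stmt0 {S : Type u} {A : Type v} [Fintype S] [Fintype A] [Nonempty S] [Nonempty A]
    (M : MDP S A) (T : Set S) (hT : M.SinkSet T) (s : S) (a : A) (ha : M.legal s a) :
    (∑ s' : S, M.prob s a s' * M.reachVal T s') ≤ M.reachVal T s := by
  classical
  by_cases hsT : s ∈ T
  · -- sink case: prob s a s = 1, everything else 0
    obtain ⟨d, hd⟩ := Option.isSome_iff_exists.mp ha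
    have hsum := M.sum_one s a d hd
    have hprob : ∀ s', M.prob s a s' = (d s' : ℝ≥0∞) := fun s' => by
      simp [MDP.prob, hd]
    have h1 : M.prob s a s = 1 := (hT s hsT).2 a ha
    have hds : d s = 1 := by
      have := h1
      rw [hprob] at this
      exact_mod_cast this
    have hzero : ∀ s' ≠ s, d s' = 0 := by
      intro s' hs'
      have hsplit : ∑ x : S, d x = d s + ∑ x ∈ Finset.univ.erase s, d x :=
        (Finset.add_sum_erase _ _ (Finset.mem_univ s)).symm
      rw [hsum, hds] at hsplit
      have : ∑ x ∈ Finset.univ.erase s, d x = 0 := by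
        have h := hsplit
        nth_rewrite 1 [show (1 : NNReal) = 1 + 0 by ring] at h
        exact (add_left_cancel h).symm
      have := (Finset.sum_eq_zero_iff.mp this) s' (Finset.mem_erase.mpr ⟨hs', Finset.mem_univ _⟩)
      exact this
    rw [Finset.sum_eq_single s]
    · rw [h1, one_mul]
    · intro s' _ hs'
      rw [hprob, hzero s' hs']
      simp
    · intro h; exact absurd (Finset.mem_univ s) h
  · -- main case
    have hkey : ∀ τ : S → Strat S A, (∀ x, M.IsStrategy (τ x)) →
        (∑ x : S, M.prob s a x * M.prReach (τ x) x T) ≤ M.reachVal T s := by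
      intro τ hτ
      set σc := combStrat M s a τ with hσc
      have hstrat : M.IsStrategy σc := combStrat_isStrategy M s a ha τ hτ
      have hre : M.prReach σc s T ≤ M.reachVal T s := by
        rw [MDP.reachVal]
        exact le_iSup₂_of_le σc hstrat le_rfl
      refine le_trans ?_ hre
      -- notation
      set g : S → List (A × S) → ℝ≥0∞ := fun x l =>
        if M.IsPath ⟨x, l⟩ ∧ MDP.HitsFirst T ⟨x, l⟩ then M.cylProb (τ x) x ⟨x, l⟩ else 0 with hg
      set G : List (A × S) → ℝ≥0∞ := fun l =>
        if M.IsPath ⟨s, l⟩ ∧ MDP.HitsFirst T ⟨s, l⟩ then M.cylProb σc s ⟨s, l⟩ else 0 with hG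
      have hσca : σc s [] a = 1 := by simp [hσc, combStrat]
      have hshift : ∀ x l, wtP M.prob σc s [(a, x)] l = wtP M.prob (τ x) x [] l := by
        intro x l
        exact wtP_shift M.prob σc (τ x) s x a (fun pre a' => by simp [hσc, combStrat]) l []
      have hpoint : ∀ (x : S) (l : List (A × S)),
          M.prob s a x * g x l ≤ G ((a, x) :: l) := by
        intro x l
        by_cases hgx : M.IsPath ⟨x, l⟩ ∧ MDP.HitsFirst T ⟨x, l⟩
        · simp only [hg, if_pos hgx]
          rcases eq_or_ne (M.prob s a x) 0 with h0 | h0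
          · simp [h0]
          · have hpos : 0 < M.prob s a x := pos_iff_ne_zero.mpr h0
            have hcondPath : M.IsPath ⟨s, (a, x) :: l⟩ := ⟨ha, hpos, hgx.1⟩
            have hcondHit : MDP.HitsFirst T ⟨s, (a, x) :: l⟩ := by
              obtain ⟨hlast, hdrop⟩ := hgx.2
              refine ⟨hlast, ?_⟩
              intro y hy
              have hstates : (FPath.states (⟨s, (a, x) :: l⟩ : FPath S A)).dropLast
                  = s :: (FPath.states (⟨x, l⟩ : FPath S A)).dropLast := by
                simp [FPath.states]
              rw [hstates] at hy
              rcases List.mem_cons.mp hy with h | h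
              · subst h; exact hsT
              · exact hdrop y h
            simp only [hG]
            have hc1 : M.cylProb σc s ⟨s, (a, x) :: l⟩ = wtP M.prob σc s [] ((a, x) :: l) := by
              simp [MDP.cylProb, cylProbP]
            have hc2 : M.cylProb (τ x) x ⟨x, l⟩ = wtP M.prob (τ x) x [] l := by
              simp [MDP.cylProb, cylProbP]
            rw [hc1, hc2, wtP, hσca]
            have : lastState s ([] : List (A × S)) = s := rfl
            rw [this, one_mul]
            rw [show ([] : List (A × S)) ++ [(a, x)] = [(a, x)] from rfl, hshift x l]
            rw [if_pos (And.intro hcondPath hcondHit)]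
        · simp only [hg, if_neg hgx, mul_zero]
          exact zero_le
      calc ∑ x : S, M.prob s a x * M.prReach (τ x) x T
          = ∑ x : S, ∑' l : List (A × S), M.prob s a x * g x l := by
            refine Finset.sum_congr rfl fun x _ => ?_
            rw [prReach_eq_list, ENNReal.tsum_mul_left]
        _ = ∑' x : S, ∑' l : List (A × S), M.prob s a x * g x l := (tsum_fintype _).symm
        _ = ∑' p : S × List (A × S), M.prob s a p.1 * g p.1 p.2 := ENNReal.tsum_prod.symm
        _ ≤ ∑' l : List (A × S), G l := by
            refine Summable.tsum_le_tsum_of_inj (fun p : S × List (A × S) => (a, p.1) :: p.2)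
              (fun p q hpq => ?_) (fun _ _ => zero_le)
              (fun p => hpoint p.1 p.2) ENNReal.summable ENNReal.summable
            obtain ⟨h1, h2⟩ : p.1 = q.1 ∧ p.2 = q.2 := by
              simpa [Prod.ext_iff] using hpq
            exact Prod.ext h1 h2
        _ = M.prReach σc s T := (prReach_eq_list M σc s T).symm
    -- reduce reachVal to families of strategies
    haveI : Nonempty {σ : Strat S A // M.IsStrategy σ} :=
      ⟨⟨baseStrat M, baseStrat_isStrategy M⟩⟩
    have hval : ∀ x, M.reachVal T x
        = ⨆ σ : {σ : Strat S A // M.IsStrategy σ}, M.prReach σ.1 x T := fun x => by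
      rw [MDP.reachVal, iSup_subtype']
    calc ∑ x : S, M.prob s a x * M.reachVal T x
        = ∑ x : S, ⨆ σ : {σ : Strat S A // M.IsStrategy σ},
            M.prob s a x * M.prReach σ.1 x T := by
          refine Finset.sum_congr rfl fun x _ => ?_
          rw [hval x, ENNReal.mul_iSup]
      _ ≤ ⨆ gg : S → {σ : Strat S A // M.IsStrategy σ},
            ∑ x : S, M.prob s a x * M.prReach (gg x).1 x T :=
          finset_sum_iSup_le _ _
      _ ≤ M.reachVal T s :=
          iSup_le fun gg => hkey (fun x => (gg x).1) (fun x => (gg x).2)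
end

section
/- For every strategy σ ∈ Σ^Opt, every state s₀ ∈ S', and every T-hitting path ρ starting at s₀ that is a finite path of M' (all states in S', all steps in Opt), P'_{σ,s₀}(ρ) = P_{σ,s₀}(ρ)/Val(s₀). -/
open scoped ENNReal NNReal Classical
open Filter

universe u v

variable {S : Type u} {A : Type v}

section Aux

variable {S : Type u} {A : Type v} [Fintype S] [Fintype A]

lemma lastState_append (s : S) (l₁ l₂ : List (A × S)) :
    lastState s (l₁ ++ l₂) = lastState (lastState s l₁) l₂ := by
  induction l₁ generalizing s with
  | nil => rfl
  | cons p rest ih => cases p; simp [lastState, ih]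

lemma pruned_pos {M : MDP S A} {v : S → ℝ≥0∞} {opt : S → A → Prop} {s : S}
    {steps : List (A × S)} (h : M.IsPathFromPruned v opt s steps) : 0 < v s := by
  cases steps with
  | nil => exact h
  | cons p rest => exact h.1

lemma prReach_of_mem_sink {M : MDP S A} {T : Set S} {t : S} (ht : t ∈ T)
    (σ' : Strat S A) : M.prReach σ' t T = 1 := by
  classical
  have hmem : M.IsPath (⟨t, []⟩ : FPath S A) ∧ MDP.HitsFirst T (⟨t, []⟩ : FPath S A) ∧
      (⟨t, []⟩ : FPath S A).start = t := by
    refine ⟨trivial, ⟨ht, ?_⟩, rfl⟩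
    intro x hx
    simp [FPath.states] at hx
  set ρ₀ : {ρ : FPath S A // M.IsPath ρ ∧ MDP.HitsFirst T ρ ∧ ρ.start = t} := ⟨_, hmem⟩
  have huniq : ∀ b : {ρ : FPath S A // M.IsPath ρ ∧ MDP.HitsFirst T ρ ∧ ρ.start = t},
      b = ρ₀ := by
    rintro ⟨⟨s, steps⟩, hp, hh, hs⟩
    cases hs
    cases steps with
    | nil => rfl
    | cons p rest =>
      exfalso
      exact hh.2 s (by simp [FPath.states, List.dropLast]) ht
  rw [MDP.prReach, tsum_eq_single ρ₀ (fun b hb => absurd (huniq b) hb)]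
  simp [ρ₀, MDP.cylProb, cylProbP, wtP]

lemma reachVal_of_mem_sink {M : MDP S A} {T : Set S} {t : S} (ht : t ∈ T)
    (σ : Strat S A) (hσ : M.IsStrategy σ) : M.reachVal T t = 1 := by
  refine le_antisymm ?_ ?_
  · exact iSup₂_le fun σ' _ => (prReach_of_mem_sink ht σ').le
  · have h1 : (1 : ℝ≥0∞) = M.prReach σ t T := (prReach_of_mem_sink ht σ).symm
    rw [h1]
    exact le_iSup₂ (f := fun σ' (_ : M.IsStrategy σ') => M.prReach σ' t T) σ hσ

lemma wtP_pruned_eq {M : MDP S A} {T : Set S} (σ : Strat S A) (s₀ : S) :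
    ∀ (steps pre : List (A × S)),
      M.IsPathFromPruned (M.reachVal T) (M.OptR T) (lastState s₀ pre) steps →
      M.reachVal T (lastState (lastState s₀ pre) steps) ≠ ⊤ →
      wtP (M.probR' T) σ s₀ pre steps =
        wtP M.prob σ s₀ pre steps *
          M.reachVal T (lastState (lastState s₀ pre) steps) /
          M.reachVal T (lastState s₀ pre) := by
  intro steps
  induction steps with
  | nil =>
    intro pre h hL
    have hpos : 0 < M.reachVal T (lastState s₀ pre) := h
    simp only [wtP, lastState]
    rw [one_mul, ENNReal.div_self hpos.ne' hL]
  | cons p rest ih =>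
    rcases p with ⟨a, s'⟩
    intro pre h hL
    obtain ⟨hpos, hopt, hprob, hrest⟩ := h
    have hlast' : lastState s₀ (pre ++ [(a, s')]) = s' := by
      rw [lastState_append]; rfl
    have hrest' : M.IsPathFromPruned (M.reachVal T) (M.OptR T)
        (lastState s₀ (pre ++ [(a, s')])) rest := by rw [hlast']; exact hrest
    have hL' : lastState (lastState s₀ pre) ((a, s') :: rest) = lastState s' rest := rfl
    have hLr : M.reachVal T (lastState (lastState s₀ (pre ++ [(a, s')])) rest) ≠ ⊤ := by
      rw [hlast']; rw [hL'] at hL; exact hL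
    have hIH := ih (pre ++ [(a, s')]) hrest' hLr
    set s := lastState s₀ pre with hs
    by_cases hvs : M.reachVal T s = ⊤
    · -- everything is zero
      have hpr' : M.probR' T s a s' = 0 := by
        rw [MDP.probR', if_pos ⟨hopt, hpos⟩, hvs, ENNReal.div_top]
      rw [wtP, hpr', hvs, ENNReal.div_top]
      ring
    · -- finite case
      have hvs' : M.reachVal T s' ≠ ⊤ := by
        intro htop
        apply hvs
        have hle : M.prob s a s' * M.reachVal T s' ≤ M.reachVal T s := by
          rw [hopt.2]
          exact Finset.single_le_sum (f := fun x => M.prob s a x * M.reachVal T x)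
            (fun _ _ => zero_le) (Finset.mem_univ s')
        rw [htop, ENNReal.mul_top hprob.ne'] at hle
        exact top_le_iff.mp hle
      have hvs'0 : M.reachVal T s' ≠ 0 := (pruned_pos hrest).ne'
      have hpr' : M.probR' T s a s' =
          M.prob s a s' * M.reachVal T s' / M.reachVal T s := by
        rw [MDP.probR', if_pos ⟨hopt, hpos⟩]
      rw [wtP, wtP, hpr', hIH, hlast', hL']
      simp only [div_eq_mul_inv]
      have hc : M.reachVal T s' * (M.reachVal T s')⁻¹ = 1 :=
        ENNReal.mul_inv_cancel hvs'0 hvs'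
      generalize M.reachVal T s' = v' at hc ⊢
      generalize (M.reachVal T s)⁻¹ = iv
      generalize v'⁻¹ = iv' at hc ⊢
      calc σ s₀ pre a * (M.prob s a s' * v' * iv) *
            (wtP M.prob σ s₀ (pre ++ [(a, s')]) rest * M.reachVal T (lastState s' rest) * iv')
          = σ s₀ pre a * M.prob s a s' * wtP M.prob σ s₀ (pre ++ [(a, s')]) rest *
              M.reachVal T (lastState s' rest) * iv * (v' * iv') := by ring
        _ = _ := by rw [hc, mul_one]

end Aux


/-- for `σ ∈ Σ^Opt`, `s₀ ∈ S'`, and every `T`-hitting path `ρ` of `M'`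
starting at `s₀`, `P'_{σ,s₀}(ρ) = P_{σ,s₀}(ρ)/Val(s₀)`. -/
theorem stmt2 {S : Type u} {A : Type v} [Fintype S] [Fintype A] [Nonempty S] [Nonempty A]
    (M : MDP S A) (T : Set S) (hT : M.SinkSet T)
    (σ : Strat S A) (hσ : M.IsStrategy σ) (hopt : M.SigmaOptR T σ)
    (s₀ : S) (hs₀ : 0 < M.reachVal T s₀)
    (ρ : FPath S A) (hstart : ρ.start = s₀)
    (hρ : M.IsPathR' T ρ) (hhit : MDP.HitsFirst T ρ) :
    M.cylProbR' T σ s₀ ρ = M.cylProb σ s₀ ρ / M.reachVal T s₀ := by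
  have hval1 : M.reachVal T ρ.last = 1 :=
    reachVal_of_mem_sink hhit.1 σ hσ
  subst hstart
  rw [MDP.cylProbR', MDP.cylProb, cylProbP, cylProbP, if_pos rfl, if_pos rfl]
  have hρ' : M.IsPathFromPruned (M.reachVal T) (M.OptR T) (lastState ρ.start ([] : List (A × S))) ρ.steps := hρ
  have hL : M.reachVal T (lastState (lastState ρ.start ([] : List (A × S))) ρ.steps) ≠ ⊤ := by
    have : lastState (lastState ρ.start ([] : List (A × S))) ρ.steps = ρ.last := rfl
    rw [this, hval1]; exact ENNReal.one_ne_top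
  rw [wtP_pruned_eq σ ρ.start ρ.steps [] hρ' hL]
  have : lastState (lastState ρ.start ([] : List (A × S))) ρ.steps = ρ.last := rfl
  rw [this, hval1, mul_one]
  rfl
end
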